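/- For the action of G = ℝ² on ℝ² given by λ((a,b),(x,y)) = (x, y + a + bx), the G-invariant vector fields are exactly those of the form d(x) ∂/∂y; consequently the foliate vector field ∂/∂x (i.e., ẋ = 1, ẏ = 0) cannot be written as the sum of a vector field tangent to the orbits and a G-invariant vector field. -/

import Mathlib

open VectorField

private lemma fderiv_gen2 (p : ℝ × ℝ) :
    fderiv ℝ (fun q : ℝ × ℝ => ((0:ℝ), q.1)) p
      = ((0 : (ℝ × ℝ) →L[ℝ] ℝ).prod (ContinuousLinearMap.fst ℝ ℝ ℝ)) := by
  have := ((0 : (ℝ × ℝ) →L[ℝ] ℝ).prod (ContinuousLinearMap.fst ℝ ℝ ℝ)).fderiv (x := p)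
  convert this using 2
  funext q; rfl

private lemma fderiv_dir_y {d : ℝ × ℝ → ℝ} (hd : Differentiable ℝ d) (x t : ℝ) :
    HasDerivAt (fun s => d (x, s)) (fderiv ℝ d (x, t) (0, 1)) t := by
  have h1 : HasDerivAt (fun s : ℝ => (x, s)) ((0 : ℝ), (1 : ℝ)) t := by
    have := ((hasDerivAt_const t x).prodMk (hasDerivAt_id t))
    simpa using this
  exact (hd (x, t)).hasFDerivAt.comp_hasDerivAt t h1

/-- For the action of `G = ℝ²` on `ℝ²` given by
`λ((a,b),(x,y)) = (x, y + a + bx)`, with infinitesimal generators `ξ_M = ∂/∂y` and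
`η_M = x ∂/∂y`, the `G`-invariant vector fields (those commuting with both generators)
are exactly those of the form `d(x) ∂/∂y`.  Consequently the foliate vector field
`∂/∂x` cannot be written as the sum of a vector field tangent to the orbits (vertical)
and a `G`-invariant vector field. -/
theorem counterexample_no_tangent_invariant_decomposition :
    (∀ c d : ℝ × ℝ → ℝ, Differentiable ℝ c → Differentiable ℝ d →
      (((∀ p : ℝ × ℝ,
          VectorField.lieBracket ℝ (fun _ => ((0 : ℝ), (1 : ℝ)))
            (fun q => (c q, d q)) p = 0) ∧
        (∀ p : ℝ × ℝ,
          VectorField.lieBracket ℝ (fun q : ℝ × ℝ => ((0 : ℝ), q.1))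
            (fun q => (c q, d q)) p = 0)) ↔
        ((∀ p, c p = 0) ∧ ∃ d0 : ℝ → ℝ, ∀ p : ℝ × ℝ, d p = d0 p.1))) ∧
    ¬ ∃ Xt Xi : ℝ × ℝ → ℝ × ℝ, Differentiable ℝ Xi ∧
        (∀ p, (Xt p).1 = 0) ∧
        (∀ p : ℝ × ℝ,
          VectorField.lieBracket ℝ (fun _ => ((0 : ℝ), (1 : ℝ))) Xi p = 0) ∧
        (∀ p : ℝ × ℝ,
          VectorField.lieBracket ℝ (fun q : ℝ × ℝ => ((0 : ℝ), q.1)) Xi p = 0) ∧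
        (∀ p, Xt p + Xi p = ((1 : ℝ), (0 : ℝ))) := by
  constructor
  · intro c d hc hd
    have hX : ∀ p : ℝ × ℝ, fderiv ℝ (fun q => (c q, d q)) p
        = (fderiv ℝ c p).prod (fderiv ℝ d p) := fun p =>
      ((hc p).hasFDerivAt.prodMk (hd p).hasFDerivAt).fderiv
    constructor
    · rintro ⟨hb1, hb2⟩
      -- bracket with constant field: fderiv X p (0,1) = 0
      have key : ∀ p : ℝ × ℝ, fderiv ℝ c p ((0:ℝ),(1:ℝ)) = 0 ∧
          fderiv ℝ d p ((0:ℝ),(1:ℝ)) = 0 := by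
        intro p
        have := hb1 p
        simp only [lieBracket, fderiv_fun_const, Pi.zero_apply,
          ContinuousLinearMap.zero_apply, sub_zero, hX p,
          ContinuousLinearMap.prod_apply] at this
        exact ⟨congrArg Prod.fst this, congrArg Prod.snd this⟩
      have hc0 : ∀ p : ℝ × ℝ, c p = 0 := by
        intro p
        have := hb2 p
        rw [lieBracket, fderiv_gen2] at this
        have hsm : ((0:ℝ), p.1) = p.1 • ((0:ℝ), (1:ℝ)) := by simp
        rw [hX p] at this
        simp only [ContinuousLinearMap.prod_apply, ContinuousLinearMap.zero_apply,
          ContinuousLinearMap.coe_fst', hsm, map_smul, (key p).1, (key p).2] at this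
        have h2 := congrArg Prod.snd this
        simpa using h2
      refine ⟨hc0, ⟨fun x => d (x, 0), ?_⟩⟩
      intro p
      have hdiff : Differentiable ℝ (fun s => d (p.1, s)) :=
        fun t => (fderiv_dir_y hd p.1 t).differentiableAt
      have hder : ∀ t, deriv (fun s => d (p.1, s)) t = 0 := by
        intro t
        rw [(fderiv_dir_y hd p.1 t).deriv, (key (p.1, t)).2]
      have := is_const_of_deriv_eq_zero hdiff hder p.2 0
      simpa using this
    · rintro ⟨hc0, d0, hd0⟩
      have kc : ∀ p : ℝ × ℝ, fderiv ℝ c p = 0 := by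
        intro p
        have : c = fun _ => (0:ℝ) := funext hc0
        rw [this, fderiv_fun_const]; rfl
      have kd : ∀ p : ℝ × ℝ, fderiv ℝ d p ((0:ℝ),(1:ℝ)) = 0 := by
        intro p
        have h1 := fderiv_dir_y hd p.1 p.2
        have h2 : HasDerivAt (fun s => d (p.1, s)) 0 p.2 := by
          have : (fun s => d (p.1, s)) = fun _ => d0 p.1 := by
            funext s; exact hd0 (p.1, s)
          rw [this]; exact hasDerivAt_const _ _
        exact h1.unique h2
      have key : ∀ p : ℝ × ℝ, fderiv ℝ (fun q => (c q, d q)) p ((0:ℝ),(1:ℝ)) = 0 := by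
        intro p
        rw [hX p]
        simp [ContinuousLinearMap.prod_apply, kc p, kd p]
      constructor
      · intro p
        simp [lieBracket, fderiv_const, key p]
      · intro p
        rw [lieBracket, fderiv_gen2]
        have hsm : ((0:ℝ), p.1) = p.1 • ((0:ℝ), (1:ℝ)) := by simp
        rw [hsm, map_smul, key p]
        simp [hc0 p]
  · rintro ⟨Xt, Xi, _, hXt1, _, hb2, hsum⟩
    have hXi1 : (Xi 0).1 = 1 := by
      have := congrArg Prod.fst (hsum 0)
      simpa [hXt1 0] using this
    have := hb2 0
    rw [lieBracket, fderiv_gen2] at this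
    simp [Prod.mk_zero_zero] at this
    rw [hXi1] at this
    exact one_ne_zero this
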